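/- The spectral radius of R is strictly less than 1. -/

import Mathlib

open Matrix

/-- Under the nonnegativity, row-sum and out-connectedness assumptions,
the spectral radius of the routing matrix `R` is strictly less than `1`, i.e., every
(complex) eigenvalue of `R` has absolute value strictly less than `1`. -/
theorem spectral_radius_lt_one
    {E : Type*} [Fintype E] [DecidableEq E] [Nonempty E]
    (S : Finset E) (hS : S.Nonempty)
    (R : Matrix E E ℝ)
    (hRnn : ∀ i j, 0 ≤ R i j)
    (hrow1 : ∀ i, i ∉ S → ∑ j, R i j = 1)
    (hrow0 : ∀ i, i ∈ S → ∑ j, R i j = 0)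
    (hout : ∀ i₀ : E, ∃ (l : ℕ) (p : Fin (l + 1) → E), p 0 = i₀ ∧
      p (Fin.last l) ∈ S ∧ 0 < ∏ h : Fin l, R (p h.castSucc) (p h.succ)) :
    ∀ μ ∈ spectrum ℂ (R.map (Complex.ofReal ·)), ‖μ‖ < 1 := by
  intro μ hμ
  by_contra hlt
  push_neg at hlt
  set A := R.map (Complex.ofReal ·) with hAdef
  obtain ⟨v, hv0, hv⟩ : ∃ v : E → ℂ, v ≠ 0 ∧ A *ᵥ v = μ • v := by
    rw [spectrum.mem_iff, Matrix.isUnit_iff_isUnit_det] at hμ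
    have hdet : ((algebraMap ℂ (Matrix E E ℂ)) μ - A).det = 0 := by
      by_contra h0
      exact hμ (isUnit_iff_ne_zero.mpr h0)
    obtain ⟨v, hv0, hv⟩ := (Matrix.exists_mulVec_eq_zero_iff).mpr hdet
    refine ⟨v, hv0, ?_⟩
    rw [sub_mulVec] at hv
    have h2 : (algebraMap ℂ (Matrix E E ℂ)) μ *ᵥ v = μ • v := by
      ext i
      simp [Matrix.algebraMap_eq_diagonal, mulVec_diagonal, Pi.algebraMap_apply, mul_comm]
    rw [h2, sub_eq_zero] at hv
    exact hv.symm
  set w : E → ℝ := fun i => ‖v i‖ with hwdef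
  have hwnn : ∀ i, 0 ≤ w i := fun i => norm_nonneg _
  have key : ∀ i, w i ≤ ∑ j, R i j * w j := by
    intro i
    have h1 : ‖μ‖ * w i = ‖(A *ᵥ v) i‖ := by
      rw [hv]
      simp [hwdef, _root_.map_mul]
    have h2 : ‖(A *ᵥ v) i‖ ≤ ∑ j, R i j * w j := by
      show ‖∑ j, A i j * v j‖ ≤ _
      calc ‖∑ j, A i j * v j‖ ≤ ∑ j, ‖A i j * v j‖ :=
            norm_sum_le _ _
        _ = ∑ j, R i j * w j := by
            apply Finset.sum_congr rfl
            intro j _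
            rw [norm_mul]
            congr 1
            simp [hAdef, Matrix.map_apply, Complex.norm_real, Real.norm_eq_abs, abs_of_nonneg (hRnn i j)]
    calc w i = 1 * w i := (one_mul _).symm
      _ ≤ ‖μ‖ * w i := mul_le_mul_of_nonneg_right hlt (hwnn i)
      _ = ‖(A *ᵥ v) i‖ := h1
      _ ≤ ∑ j, R i j * w j := h2
  have hsink : ∀ i ∈ S, ∀ j, R i j = 0 := by
    intro i hi j
    exact (Finset.sum_eq_zero_iff_of_nonneg (fun j _ => hRnn i j)).mp (hrow0 i hi) j
      (Finset.mem_univ j)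
  obtain ⟨i₀, -, hi₀⟩ := Finset.exists_max_image Finset.univ w
    ⟨Classical.arbitrary E, Finset.mem_univ _⟩
  set Mx := w i₀ with hMxdef
  have hMx : ∀ j, w j ≤ Mx := fun j => hi₀ j (Finset.mem_univ j)
  have hMxpos : 0 < Mx := by
    rcases lt_or_ge 0 Mx with h | h
    · exact h
    · exfalso
      apply hv0
      funext i
      have : w i = 0 := le_antisymm (le_trans (hMx i) h) (hwnn i)
      exact norm_eq_zero.mp this
  have hsinkw : ∀ i ∈ S, w i ≤ 0 := by
    intro i hi
    calc w i ≤ ∑ j, R i j * w j := key i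
      _ = 0 := by simp [hsink i hi]
  have hnotS : ∀ i, w i = Mx → i ∉ S := by
    intro i hiMx hiS
    have := hsinkw i hiS
    rw [hiMx] at this
    linarith
  have hstep : ∀ i, i ∉ S → w i = Mx → ∀ j, 0 < R i j → w j = Mx := by
    intro i hiS hiMx j hij
    by_contra hne
    have hjlt : w j < Mx := lt_of_le_of_ne (hMx j) hne
    have hlt2 : ∑ k, R i k * w k < ∑ k, R i k * Mx :=
      Finset.sum_lt_sum (fun k _ => mul_le_mul_of_nonneg_left (hMx k) (hRnn i k))
        ⟨j, Finset.mem_univ j, mul_lt_mul_of_pos_left hjlt hij⟩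
    have hsum : ∑ k, R i k * Mx = Mx := by rw [← Finset.sum_mul, hrow1 i hiS, one_mul]
    have hk := key i
    rw [hiMx] at hk
    linarith
  obtain ⟨l, p, hp0, hpl, hppos⟩ := hout i₀
  have hfac : ∀ h : Fin l, 0 < R (p h.castSucc) (p h.succ) := by
    intro h
    rcases (hRnn (p h.castSucc) (p h.succ)).lt_or_eq with hlt' | heq
    · exact hlt'
    · exfalso
      rw [Finset.prod_eq_zero (Finset.mem_univ h) heq.symm] at hppos
      exact lt_irrefl 0 hppos
  have hall : ∀ k : ℕ, (hk : k < l + 1) → w (p ⟨k, hk⟩) = Mx := by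
    intro k
    induction k with
    | zero =>
      intro hk
      rw [show (⟨0, hk⟩ : Fin (l+1)) = 0 from rfl, hp0]
    | succ n ih =>
      intro hk
      have hn : n < l + 1 := Nat.lt_of_succ_lt hk
      have hnl : n < l := Nat.lt_of_succ_lt_succ hk
      have hwn : w (p ((⟨n, hnl⟩ : Fin l).castSucc)) = Mx := ih hn
      have := hstep _ (hnotS _ hwn) hwn _ (hfac ⟨n, hnl⟩)
      exact this
  have hlast : w (p (Fin.last l)) = Mx := hall l (Nat.lt_succ_self l)
  exact hnotS _ hlast hpl
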